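/- Let A be a finite set and let n > |A|. Two words u, v ∈ A^n are connected by a finite sequence of moves, each of which cyclically rotates three consecutive symbols (i.e., replaces a word of the form x·a·b·c·y by x·b·c·a·y, where a,b,c ∈ A and x, y are words with |x|+|y| = n−3), if and only if u and v have the same weight. -/

import Mathlib

/-- The weight of a word `x ∈ A^n`: the number of occurrences of each symbol. -/
def weight {A : Type*} [DecidableEq A] {n : ℕ} (x : Fin n → A) : A → ℕ :=
  fun a => (Finset.univ.filter fun i => x i = a).card

/-- The `3`-cycle of indices `i ↦ i+1 ↦ i+2 ↦ i` in `Fin n`. -/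
def rot3 {n : ℕ} (i : Fin n) (hi : (i : ℕ) + 2 < n) : Equiv.Perm (Fin n) :=
  Equiv.swap i ⟨(i : ℕ) + 1, by omega⟩ *
    Equiv.swap ⟨(i : ℕ) + 1, by omega⟩ ⟨(i : ℕ) + 2, hi⟩

/-- One move cyclically rotating three consecutive symbols: `x·a·b·c·y` becomes `x·b·c·a·y`. -/
def rotStep {A : Type*} {n : ℕ} (u v : Fin n → A) : Prop :=
  ∃ (i : Fin n) (hi : (i : ℕ) + 2 < n), v = fun j => u (rot3 i hi j)

open Equiv Equiv.Perm Relation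

section Aux
variable {A : Type*} {n : ℕ}

lemma weight_comp [DecidableEq A] (u : Fin n → A) (σ : Equiv.Perm (Fin n)) :
    weight (u ∘ ⇑σ) = weight u := by
  funext a
  unfold weight
  apply Finset.card_bij (fun i _ => σ i)
  · intro i hi; simpa using (Finset.mem_filter.mp hi).2
  · intro i _ j _ h; exact σ.injective h
  · intro b hb
    exact ⟨σ.symm b, by simpa using (Finset.mem_filter.mp hb).2, by simp⟩

lemma rot3_cube (i : Fin n) (hi : (i : ℕ) + 2 < n) : rot3 i hi ^ 3 = 1 := by
  have h3 : (rot3 i hi).IsThreeCycle := by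
    have := Equiv.Perm.isThreeCycle_swap_mul_swap_same
      (a := (⟨(i : ℕ) + 1, by omega⟩ : Fin n)) (b := i) (c := ⟨(i : ℕ) + 2, hi⟩)
      (by simp [Fin.ext_iff]) (by simp [Fin.ext_iff]) (by simp [Fin.ext_iff])
    rw [Equiv.swap_comm] at this
    exact this
  rw [← h3.orderOf]
  exact pow_orderOf_eq_one _

lemma rotStep_symm {b c : Fin n → A} (h : rotStep b c) :
    Relation.ReflTransGen rotStep c b := by
  obtain ⟨i, hi, rfl⟩ := h
  have s1 : rotStep (fun j => b (rot3 i hi j))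
      (fun j => b (rot3 i hi (rot3 i hi j))) := ⟨i, hi, rfl⟩
  have s2 : rotStep (fun j => b (rot3 i hi (rot3 i hi j)))
      (fun j => b (rot3 i hi (rot3 i hi (rot3 i hi j)))) := ⟨i, hi, rfl⟩
  have key : (fun j => b (rot3 i hi (rot3 i hi (rot3 i hi j)))) = b := by
    funext j
    have h1 : rot3 i hi (rot3 i hi (rot3 i hi j)) = (rot3 i hi ^ 3) j := by
      simp [pow_succ, Equiv.Perm.mul_apply]
    rw [h1, rot3_cube]
    rfl
  rw [key] at s2
  exact (ReflTransGen.single s1).tail s2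

lemma reach_symm {u v : Fin n → A} (h : Relation.ReflTransGen rotStep u v) :
    Relation.ReflTransGen rotStep v u := by
  induction h with
  | refl => exact .refl
  | tail _ hstep ih => exact .trans (rotStep_symm hstep) ih

/-- reachability of `u ∘ σ` from `u`, for all `u`. -/
def P (σ : Equiv.Perm (Fin n)) : Prop :=
  ∀ u : Fin n → A, Relation.ReflTransGen rotStep u (u ∘ ⇑σ)

lemma P_one : P (A := A) (1 : Equiv.Perm (Fin n)) := fun _ => by
  simpa using ReflTransGen.refl

lemma P_mul {σ τ : Equiv.Perm (Fin n)} (hσ : P (A := A) σ) (hτ : P (A := A) τ) :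
    P (A := A) (σ * τ) := fun u => by
  have h2 := hτ (u ∘ ⇑σ)
  exact .trans (hσ u) (by simpa [Function.comp_assoc] using h2)

lemma P_inv {σ : Equiv.Perm (Fin n)} (hσ : P (A := A) σ) : P (A := A) σ⁻¹ := fun u => by
  have := hσ (u ∘ ⇑σ⁻¹)
  have h2 : (u ∘ ⇑σ⁻¹) ∘ ⇑σ = u := by
    funext j; simp
  rw [h2] at this
  exact reach_symm this

lemma P_rot3 (i : Fin n) (hi : (i : ℕ) + 2 < n) : P (A := A) (rot3 i hi) := fun u =>
  ReflTransGen.single ⟨i, hi, rfl⟩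

lemma mul_helper {G : Type*} [Group G] (x y z : G) (h : y * y = 1) :
    x * z = (x * y) * (y * z) := by
  rw [mul_assoc, ← mul_assoc y y z, h, one_mul]

lemma P_pair : ∀ (d a : ℕ) (h : a + d + 1 < n),
    P (A := A) (Equiv.swap ⟨a, by omega⟩ ⟨a + 1, by omega⟩ *
      Equiv.swap ⟨a + d, by omega⟩ ⟨a + d + 1, h⟩) := by
  intro d
  induction d with
  | zero =>
    intro a h
    show P (Equiv.swap (⟨a, by omega⟩ : Fin n) ⟨a + 1, by omega⟩ *
      Equiv.swap ⟨a, by omega⟩ ⟨a + 1, by omega⟩)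
    rw [Equiv.swap_mul_self]
    exact P_one
  | succ d ih =>
    intro a h
    have e1 : (⟨a + (d+1), by omega⟩ : Fin n) = ⟨a + 1 + d, by omega⟩ :=
      Fin.ext (show a + (d+1) = a + 1 + d by omega)
    have e2 : (⟨a + (d+1) + 1, h⟩ : Fin n) = ⟨a + 1 + d + 1, by omega⟩ :=
      Fin.ext (show a + (d+1) + 1 = a + 1 + d + 1 by omega)
    rw [e1, e2]
    have key : Equiv.swap (⟨a, by omega⟩ : Fin n) ⟨a + 1, by omega⟩ *
        Equiv.swap (⟨a + 1 + d, by omega⟩ : Fin n) ⟨a + 1 + d + 1, by omega⟩ =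
        (Equiv.swap (⟨a, by omega⟩ : Fin n) ⟨a + 1, by omega⟩ *
          Equiv.swap (⟨a + 1, by omega⟩ : Fin n) ⟨a + 1 + 1, by omega⟩) *
        (Equiv.swap (⟨a + 1, by omega⟩ : Fin n) ⟨a + 1 + 1, by omega⟩ *
          Equiv.swap (⟨a + 1 + d, by omega⟩ : Fin n) ⟨a + 1 + d + 1, by omega⟩) :=
      mul_helper _ _ _ (Equiv.swap_mul_self _ _)
    rw [key]
    exact P_mul (P_rot3 ⟨a, by omega⟩ (show a + 2 < n by omega)) (ih (a + 1) (by omega))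

lemma P_pair' (a b : ℕ) (ha : a + 1 < n) (hb : b + 1 < n) :
    P (A := A) (Equiv.swap ⟨a, by omega⟩ ⟨a + 1, ha⟩ *
      Equiv.swap ⟨b, by omega⟩ ⟨b + 1, hb⟩) := by
  rcases le_or_gt a b with hab | hba
  · obtain ⟨d, rfl⟩ : ∃ d, b = a + d := ⟨b - a, by omega⟩
    exact P_pair d a (by omega)
  · obtain ⟨d, rfl⟩ : ∃ d, a = b + d := ⟨a - b, by omega⟩
    have hprev := P_pair (A := A) (n := n) d b (by omega)
    have h2 := P_inv hprev
    rw [mul_inv_rev, Equiv.swap_inv, Equiv.swap_inv] at h2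
    exact h2

lemma P_adj_pair {m : ℕ} (i j : Fin m) :
    P (A := A) (Equiv.swap i.castSucc i.succ * Equiv.swap j.castSucc j.succ) := by
  have hi : (i : ℕ) + 1 < m + 1 := by omega
  have hj : (j : ℕ) + 1 < m + 1 := by omega
  have e1 : i.castSucc = (⟨(i : ℕ), by omega⟩ : Fin (m + 1)) := rfl
  have e2 : i.succ = (⟨(i : ℕ) + 1, hi⟩ : Fin (m + 1)) := rfl
  have e3 : j.castSucc = (⟨(j : ℕ), by omega⟩ : Fin (m + 1)) := rfl
  have e4 : j.succ = (⟨(j : ℕ) + 1, hj⟩ : Fin (m + 1)) := rfl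
  rw [e1, e2, e3, e4]
  exact P_pair' _ _ hi hj

lemma P_of_list {m : ℕ} : ∀ (l : List (Equiv.Perm (Fin (m + 1)))),
    (∀ x ∈ l, x ∈ Set.range fun i : Fin m => Equiv.swap i.castSucc i.succ) →
    Equiv.Perm.sign l.prod = 1 → P (A := A) l.prod
  | [], _, _ => by simpa using P_one (A := A)
  | [s], hl, hs => by
    have hsmem := hl s (by simp)
    simp only [Set.mem_range] at hsmem
    obtain ⟨i, rfl⟩ := hsmem
    exfalso
    rw [List.prod_cons, List.prod_nil, mul_one,
      Equiv.Perm.sign_swap (Fin.castSucc_lt_succ : i.castSucc < i.succ).ne] at hs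
    exact absurd hs (by decide)
  | s :: t :: rest, hl, hs => by
    have hsmem := hl s (by simp)
    have htmem := hl t (by simp)
    simp only [Set.mem_range] at hsmem htmem
    obtain ⟨i, rfl⟩ := hsmem
    obtain ⟨j, rfl⟩ := htmem
    have hrest : Equiv.Perm.sign rest.prod = 1 := by
      rw [List.prod_cons, List.prod_cons, map_mul, map_mul,
        Equiv.Perm.sign_swap (Fin.castSucc_lt_succ : i.castSucc < i.succ).ne,
        Equiv.Perm.sign_swap (Fin.castSucc_lt_succ : j.castSucc < j.succ).ne] at hs
      rw [← mul_assoc, show ((-1 : ℤˣ) * -1) = 1 from by decide, one_mul] at hs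
      exact hs
    have hP := P_of_list rest (fun x hx => hl x (by simp [hx])) hrest
    rw [List.prod_cons, List.prod_cons, ← mul_assoc]
    exact P_mul (P_adj_pair i j) hP

lemma P_even {m : ℕ} {σ : Equiv.Perm (Fin (m + 1))} (h : Equiv.Perm.sign σ = 1) :
    P (A := A) σ := by
  have hmem : σ ∈ Submonoid.closure
      (Set.range fun i : Fin m => Equiv.swap i.castSucc i.succ) := by
    rw [Equiv.Perm.mclosure_swap_castSucc_succ]; trivial
  obtain ⟨l, hl, rfl⟩ := Submonoid.exists_list_of_mem_closure hmem
  exact P_of_list l hl h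

lemma exists_perm [DecidableEq A] {u v : Fin n → A} (hw : weight u = weight v) :
    ∃ σ : Equiv.Perm (Fin n), v = u ∘ ⇑σ := by
  classical
  have hfib : ∀ a, Fintype.card {i // u i = a} = Fintype.card {i // v i = a} := by
    intro a
    have := congrFun hw a
    simpa [weight, Fintype.card_subtype] using this
  let e : ∀ a, {i // u i = a} ≃ {i // v i = a} := fun a => Fintype.equivOfCardEq (hfib a)
  refine ⟨(Equiv.ofFiberEquiv e)⁻¹, funext fun x => ?_⟩
  have h1 := Equiv.ofFiberEquiv_map e ((Equiv.ofFiberEquiv e).symm x)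
  rw [Equiv.apply_symm_apply] at h1
  exact h1

end Aux

/-- for `n > |A|`, two words of `A^n` are connected by a finite sequence of
rotations of three consecutive symbols iff they have the same weight. -/
theorem stmt15 (A : Type*) [Fintype A] [DecidableEq A] (n : ℕ) (hn : Fintype.card A < n)
    (u v : Fin n → A) :
    Relation.ReflTransGen rotStep u v ↔ weight u = weight v := by
  classical
  constructor
  · intro h
    induction h with
    | refl => rfl
    | tail _ hstep ih =>
      obtain ⟨i, hi, rfl⟩ := hstep
      exact ih.trans (weight_comp _ (rot3 i hi)).symm
  · intro hw
    obtain ⟨m, rfl⟩ : ∃ m, n = m + 1 := ⟨n - 1, by omega⟩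
    obtain ⟨σ, rfl⟩ := exists_perm hw
    rcases Int.units_eq_one_or (Equiv.Perm.sign σ) with hs | hs
    · exact P_even hs u
    · obtain ⟨i, j, hij, huij⟩ := Fintype.exists_ne_map_eq_of_card_lt u
        (by simpa using hn)
    
      have hσ' : u ∘ ⇑σ = u ∘ ⇑(Equiv.swap i j * σ) := by
        funext x
        simp only [Function.comp_apply, Equiv.Perm.mul_apply]
        rcases eq_or_ne (σ x) i with h1 | h1
        · rw [h1, Equiv.swap_apply_left, huij]
        · rcases eq_or_ne (σ x) j with h2 | h2
          · rw [h2, Equiv.swap_apply_right, huij]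
          · rw [Equiv.swap_apply_of_ne_of_ne h1 h2]
      rw [hσ']
      apply P_even
      rw [map_mul, Equiv.Perm.sign_swap hij, hs]
      decide
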